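/- Let 𝔊 and 𝔊' be two mDAGs on the same node set V, and suppose nodes u and v are adjacent in the skeleton of 𝔊' but not in the skeleton of 𝔊. Then the e-separation relation u ⊥e v | ∅ ¬(V∖{u,v}) holds in 𝔊 but fails in 𝔊'. (Hence any observational nondominance demonstrable by comparison of skeletons is also demonstrable by comparison of e-separation relations.) -/

import Mathlib

open scoped Classical

/-! ## Basic structures: pDAGs and mDAGs -/

/-- A partitioned directed acyclic graph (pDAG) with visible node type `V` and
latent node type `L`.  Acyclicity is phrased via the existence of a topological
rank function, which for finite graphs is equivalent to the absence of directed
cycles. -/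
structure pDAG (V L : Type) where
  edge : V ⊕ L → V ⊕ L → Prop
  acyclic : ∃ rank : V ⊕ L → ℕ, ∀ a b, edge a b → rank a < rank b

/-- `P` is a probability distribution on a finite type. -/
def IsDist {α : Type} [Fintype α] (P : α → ℝ) : Prop :=
  (∀ x, 0 ≤ P x) ∧ ∑ x, P x = 1

/-- The joint assignment of outcomes to all (visible and latent) nodes obtained
from an assignment `xv` to the visible nodes and `xl` to the latent nodes. -/
def jointVal {V L : Type} (c : V → ℕ) (k : L → ℕ)
    (xv : (v : V) → Fin (c v)) (xl : (l : L) → Fin (k l)) :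
    (a : V ⊕ L) → Fin (Sum.elim c k a)
  | Sum.inl v => xv v
  | Sum.inr l => xl l

/-- A probability distribution `P` over the visible variables (with cardinalities `c`)
is realizable by the pDAG `G` (with classical unrestricted semantics, arbitrary finite
cardinalities of the latent variables) if there are latent cardinalities `k`, error
cardinalities `e`, error distributions `PE` and functions `f` (each depending only on
the values of the parents and the local error variable) whose induced marginal on the
visible variables is `P`. -/
def pDAG.Realizable {V L : Type} [Fintype V] [Fintype L] [DecidableEq V] [DecidableEq L]
    (G : pDAG V L) (c : V → ℕ) (P : ((v : V) → Fin (c v)) → ℝ) : Prop :=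
  IsDist P ∧
  ∃ (k : L → ℕ) (e : V ⊕ L → ℕ)
    (PE : (a : V ⊕ L) → Fin (e a) → ℝ)
    (f : (a : V ⊕ L) → ((b : V ⊕ L) → Fin (Sum.elim c k b)) → Fin (e a) →
      Fin (Sum.elim c k a)),
    (∀ a, IsDist (PE a)) ∧
    (∀ a g g' ε, (∀ b, G.edge b a → g b = g' b) → f a g ε = f a g' ε) ∧
    ∀ xv : (v : V) → Fin (c v),
      P xv = ∑ xl : (l : L) → Fin (k l), ∑ ε : (a : V ⊕ L) → Fin (e a),
        ∏ a : V ⊕ L,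
          (if jointVal c k xv xl a = f a (jointVal c k xv xl) (ε a) then (1:ℝ) else 0)
            * PE a (ε a)

/-- `G` observationally dominates `G'`: for every assignment of finite cardinalities to
the visible variables, every distribution realizable by `G'` is realizable by `G`. -/
def pDAG.ObsDominates {V L L' : Type} [Fintype V] [Fintype L] [Fintype L']
    [DecidableEq V] [DecidableEq L] [DecidableEq L']
    (G : pDAG V L) (G' : pDAG V L') : Prop :=
  ∀ (c : V → ℕ) (P : ((v : V) → Fin (c v)) → ℝ), G'.Realizable c P → G.Realizable c P

/-- An mDAG: a DAG on the node type `V` together with a simplicial complex on `V`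
(a family of finite subsets containing all singletons and closed under subsets). -/
structure mDAG (V : Type) where
  edge : V → V → Prop
  acyclic : ∃ rank : V → ℕ, ∀ a b, edge a b → rank a < rank b
  faces : Finset (Finset V)
  singleton_mem : ∀ v : V, {v} ∈ faces
  down_closed : ∀ A B : Finset V, A ⊆ B → B ∈ faces → A ∈ faces

namespace mDAG

variable {V : Type}

/-- A facet is an inclusion-maximal face of the simplicial complex. -/
def IsFacet (G : mDAG V) (A : Finset V) : Prop :=
  A ∈ G.faces ∧ ∀ B ∈ G.faces, A ⊆ B → A = B

/-- An mDAG is confounder-free if every facet of its simplicial complex is a singleton. -/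
def ConfounderFree (G : mDAG V) : Prop :=
  ∀ A : Finset V, G.IsFacet A → ∃ v : V, A = {v}

/-- An mDAG is directed-edge-free if its directed structure has no edges. -/
def DirectedEdgeFree (G : mDAG V) : Prop :=
  ∀ a b : V, ¬ G.edge a b

/-- `G` structurally dominates `G'` if the directed edges of `G'` are a subset of those
of `G` and the simplicial complex of `G'` is contained in that of `G`. -/
def StructDominates (G G' : mDAG V) : Prop :=
  (∀ a b : V, G'.edge a b → G.edge a b) ∧ G'.faces ⊆ G.faces

/-- The type of facets of an mDAG. -/
def Facets (G : mDAG V) : Type := {A : Finset V // G.IsFacet A}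

noncomputable instance instFintypeFacets [Fintype V] [DecidableEq V] (G : mDAG V) :
    Fintype G.Facets := Subtype.fintype _

noncomputable instance instDecidableEqFacets (G : mDAG V) :
    DecidableEq G.Facets := Classical.decEq _

/-- The canonical pDAG of an mDAG: the visible nodes carry the directed structure, and
there is one exogenous latent node per facet, whose children are exactly the members
of that facet. -/
def canon (G : mDAG V) : pDAG V G.Facets where
  edge a b :=
    match a, b with
    | Sum.inl u, Sum.inl v => G.edge u v
    | Sum.inr A, Sum.inl v => v ∈ A.1
    | _, Sum.inr _ => False
  acyclic := by
    obtain ⟨r, hr⟩ := G.acyclic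
    refine ⟨Sum.elim (fun v => r v + 1) (fun _ => 0), ?_⟩
    rintro (u | A) (v | B) h
    · simpa using hr u v h
    · exact h.elim
    · simp
    · exact h.elim

/-- Realizability of a distribution over the visible variables by an mDAG (via its
canonical pDAG). -/
def Realizable [Fintype V] [DecidableEq V] (G : mDAG V) (c : V → ℕ)
    (P : ((v : V) → Fin (c v)) → ℝ) : Prop :=
  G.canon.Realizable c P

/-- Observational dominance of mDAGs: for every assignment of finite cardinalities to
the visible nodes, every distribution realizable by `G'` is realizable by `G`. -/
def ObsDominates [Fintype V] [DecidableEq V] (G G' : mDAG V) : Prop :=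
  ∀ (c : V → ℕ) (P : ((v : V) → Fin (c v)) → ℝ), G'.Realizable c P → G.Realizable c P

/-- Observational equivalence of mDAGs. -/
def ObsEquiv [Fintype V] [DecidableEq V] (G G' : mDAG V) : Prop :=
  ∀ (c : V → ℕ) (P : ((v : V) → Fin (c v)) → ℝ), G.Realizable c P ↔ G'.Realizable c P

/-- Consistency with the fixed nodal ordering given by the order on `V`:
a later node is never an ancestor of an earlier node. -/
def OrderConsistent [LT V] (G : mDAG V) : Prop :=
  ∀ i j : V, i < j → ¬ Relation.TransGen G.edge j i

/-- `G'` is obtained from `G` by relabelling the nodes with the permutation `π`. -/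
def IsRelabel (π : Equiv.Perm V) (G G' : mDAG V) : Prop :=
  (∀ a b : V, G'.edge (π a) (π b) ↔ G.edge a b) ∧
  G'.faces = G.faces.image (Finset.image π)

/-- Adjacency in the skeleton of an mDAG: a directed edge in either direction, or
joint membership in some face of the simplicial complex. -/
def skelAdj (G : mDAG V) (u w : V) : Prop :=
  G.edge u w ∨ G.edge w u ∨ ∃ A ∈ G.faces, u ∈ A ∧ w ∈ A

end mDAG

/-! ## d-separation and e-separation -/

/-- Undirected adjacency underlying a directed graph. -/
def AdjRel {N : Type} (E : N → N → Prop) (a b : N) : Prop := E a b ∨ E b a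

/-- The middle node `y` of a consecutive triple `(x, y, z)` of a path does not block the
path given the conditioning set `C`: if `y` is a collider it has a descendant in `C`
(possibly itself), and if it is a non-collider it is not in `C`. -/
def ActiveTriple {N : Type} (E : N → N → Prop) (C : Set N) (x y z : N) : Prop :=
  ((E x y ∧ E z y) ∧ ∃ d ∈ C, Relation.ReflTransGen E y d) ∨
  (¬(E x y ∧ E z y) ∧ y ∉ C)

/-- Every consecutive triple of the path is active given the conditioning set `C`. -/
def TriplesActive {N : Type} (E : N → N → Prop) (C : Set N) : List N → Prop
  | x :: y :: z :: rest => ActiveTriple E C x y z ∧ TriplesActive E C (y :: z :: rest)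
  | _ => True

/-- `A` and `B` are d-connected given `C`: there is a (repetition-free, undirected)
path from a node of `A` to a node of `B` that is not blocked by `C`. -/
def DConnected {N : Type} (E : N → N → Prop) (A B C : Set N) : Prop :=
  ∃ p : List N, p.Chain' (AdjRel E) ∧ p.Nodup ∧
    (∃ a ∈ A, p.head? = some a) ∧ (∃ b ∈ B, p.getLast? = some b) ∧
    TriplesActive E C p

/-- d-separation: every undirected path from `A` to `B` is blocked by `C`. -/
def DSeparated {N : Type} (E : N → N → Prop) (A B C : Set N) : Prop :=
  ¬ DConnected E A B C

namespace mDAG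

variable {V : Type}

/-- d-separation of sets of (visible) nodes of an mDAG, evaluated in its canonical pDAG. -/
def dsep (G : mDAG V) (A B C : Set V) : Prop :=
  DSeparated G.canon.edge (Sum.inl '' A) (Sum.inl '' B) (Sum.inl '' C)

end mDAG

/-- The edge relation of a pDAG after deletion of the visible nodes in `D`. -/
def delEdge {V L : Type} (E : V ⊕ L → V ⊕ L → Prop) (D : Set V) (a b : V ⊕ L) : Prop :=
  E a b ∧ (∀ v, a = Sum.inl v → v ∉ D) ∧ (∀ v, b = Sum.inl v → v ∉ D)

namespace mDAG

variable {V : Type}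

/-- e-separation: `A` and `B` are e-separated by `C` after deletion of `D` if they are
d-separated by `C` in the subgraph of the canonical pDAG obtained by deleting the nodes
in `D`. -/
def eSep (G : mDAG V) (A B C D : Set V) : Prop :=
  DSeparated (delEdge G.canon.edge D) (Sum.inl '' A) (Sum.inl '' B) (Sum.inl '' C)

end mDAG

/-! ## Conditional independence -/

/-- The probability that the variables in `S` take the values specified by `g`. -/
noncomputable def margProb {V : Type} [Fintype V] [DecidableEq V] (c : V → ℕ)
    (P : ((v : V) → Fin (c v)) → ℝ) (S : Set V) (g : (v : V) → Fin (c v)) : ℝ :=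
  ∑ x : (v : V) → Fin (c v), if ∀ v ∈ S, x v = g v then P x else 0

/-- `X_A ⊥⊥ X_B | X_C` in the distribution `P`:
`P(X_A X_B | X_C) = P(X_A | X_C) P(X_B | X_C)` whenever the conditioning event has
positive probability. -/
def CondIndep {V : Type} [Fintype V] [DecidableEq V] (c : V → ℕ)
    (P : ((v : V) → Fin (c v)) → ℝ) (A B C : Set V) : Prop :=
  ∀ g : (v : V) → Fin (c v), 0 < margProb c P C g →
    margProb c P (A ∪ B ∪ C) g * margProb c P C g
      = margProb c P (A ∪ C) g * margProb c P (B ∪ C) g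

/-! ## Districts, closures and densely connected pairs -/

namespace mDAG

variable {V : Type}

/-- One step of connection through a common face, within the node subset `S`. -/
def faceStep (G : mDAG V) (S : Set V) (x y : V) : Prop :=
  x ∈ S ∧ y ∈ S ∧ ∃ F ∈ G.faces, x ∈ F ∧ y ∈ F

/-- The district of the set `A` in the sub-mDAG induced on `S`. -/
def disIn (G : mDAG V) (S A : Set V) : Set V :=
  {w | ∃ a ∈ A, Relation.ReflTransGen (G.faceStep S) a w}

/-- The ancestors of the set `A` (including `A` itself) in the directed structure
restricted to `S`. -/
def anIn (G : mDAG V) (S A : Set V) : Set V :=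
  {w | ∃ a ∈ A, Relation.ReflTransGen (fun x y => x ∈ S ∧ y ∈ S ∧ G.edge x y) w a}

/-- The alternating sequence of district and ancestor restrictions used to define
the closure of a set of nodes. -/
def closureSeq (G : mDAG V) (A : Set V) : ℕ → Set V
  | 0 => Set.univ
  | n + 1 =>
      if n % 2 = 0 then G.disIn (G.closureSeq A n) A else G.anIn (G.closureSeq A n) A

/-- The closure of a set of nodes: the limit (intersection) of the decreasing
alternating sequence. -/
def closure (G : mDAG V) (A : Set V) : Set V := ⋂ n, G.closureSeq A n

/-- `S` is bidirected-connected: it forms a single district of the induced sub-mDAG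
on `S`. -/
def BidirConnected (G : mDAG V) (S : Set V) : Prop :=
  ∀ u ∈ S, ∀ w ∈ S, Relation.ReflTransGen (G.faceStep S) u w

/-- Two distinct nodes `v`, `w` are densely connected. -/
def DenselyConnected (G : mDAG V) (v w : V) : Prop :=
  (∃ u ∈ G.closure {w}, G.edge v u) ∨
  (∃ u ∈ G.closure {v}, G.edge w u) ∨
  G.BidirConnected (G.closure {v, w})

/-- `S` is a realizable support of the mDAG `G` at cardinalities `c`: some distribution
realizable by `G` at `c` has support exactly `S`. -/
def RealizableSupport [Fintype V] [DecidableEq V] (G : mDAG V) (c : V → ℕ)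
    (S : Set ((v : V) → Fin (c v))) : Prop :=
  ∃ P : ((v : V) → Fin (c v)) → ℝ, G.Realizable c P ∧ ∀ x, x ∈ S ↔ 0 < P x

end mDAG
lemma mDAG.exists_facet_superset {V : Type} [DecidableEq V] (G : mDAG V)
    {A : Finset V} (hA : A ∈ G.faces) : ∃ F : Finset V, G.IsFacet F ∧ A ⊆ F := by
  classical
  have hne : (G.faces.filter (fun B => A ⊆ B)).Nonempty :=
    ⟨A, Finset.mem_filter.mpr ⟨hA, subset_rfl⟩⟩
  obtain ⟨F, hF, hmax⟩ := Finset.exists_max_image _ Finset.card hne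
  rw [Finset.mem_filter] at hF
  refine ⟨F, ⟨hF.1, ?_⟩, hF.2⟩
  intro B hB hFB
  have hB' : B ∈ G.faces.filter (fun B => A ⊆ B) :=
    Finset.mem_filter.mpr ⟨hB, hF.2.trans hFB⟩
  exact Finset.eq_of_subset_of_card_le hFB (hmax B hB')

/-- Let `G` and `G'` be two mDAGs on the same node set `V`, and
suppose the nodes `u` and `v` are adjacent in the skeleton of `G'` but not in the
skeleton of `G`.  Then the e-separation relation `u ⊥e v | ∅ ¬(V \ {u,v})` holds in
`G` but fails in `G'`.  (Hence any observational nondominance demonstrable by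
comparison of skeletons is also demonstrable by comparison of e-separation
relations.) -/
theorem skeleton_comparison_subsumed_by_esep
    {V : Type} [Fintype V] [DecidableEq V] (G G' : mDAG V) (u v : V)
    (h' : G'.skelAdj u v) (h : ¬ G.skelAdj u v) :
    G.eSep {u} {v} ∅ (Set.univ \ {u, v}) ∧
    ¬ G'.eSep {u} {v} ∅ (Set.univ \ {u, v}) := by
  classical
  have huv : u ≠ v := by
    intro e
    exact h (Or.inr (Or.inr ⟨{u}, G.singleton_mem u, Finset.mem_singleton_self u,
      by simp [← e]⟩))
  have hunotD : u ∉ Set.univ \ ({u, v} : Set V) := by simp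
  have hvnotD : v ∉ Set.univ \ ({u, v} : Set V) := by simp
  constructor
  · -- e-separation holds in G
    rintro ⟨p, hch, hnd, ⟨a, ha, hhd⟩, ⟨b, hb, hlst⟩, -⟩
    obtain rfl : a = Sum.inl u := by simpa using ha
    obtain rfl : b = Sum.inl v := by simpa using hb
    match p, hch, hnd, hhd, hlst with
    | [], _, _, hhd, _ => simp at hhd
    | [x], _, _, hhd, hlst =>
      have hx : x = Sum.inl u := by simpa using hhd
      have hx' : x = Sum.inl v := by simpa using hlst
      rw [hx] at hx'
      exact huv (Sum.inl.inj hx')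
    | x :: y :: t, hch, hnd, hhd, hlst =>
      have hx : x = Sum.inl u := by simpa using hhd
      subst hx
      have hxy : AdjRel (delEdge G.canon.edge (Set.univ \ {u, v})) (Sum.inl u) y :=
        (List.isChain_cons_cons.mp hch).1
      have hxney : (Sum.inl u : V ⊕ G.Facets) ≠ y := by
        have := (List.nodup_cons.mp hnd).1
        intro e; exact this (e ▸ List.mem_cons_self)
      match y with
      | Sum.inl w =>
        -- w is not deleted, w ≠ u, so w = v, giving a directed edge u–v
        have hw : w = u ∨ w = v := by
          rcases hxy with ⟨-, -, h3⟩ | ⟨-, h2, -⟩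
          · have := h3 w rfl; simp [Set.mem_diff] at this; tauto
          · have := h2 w rfl; simp [Set.mem_diff] at this; tauto
        have hwv : w = v := by
          rcases hw with rfl | rfl
          · exact absurd rfl hxney
          · rfl
        subst hwv
        rcases hxy with ⟨he, -, -⟩ | ⟨he, -, -⟩
        · exact h (Or.inl he)
        · exact h (Or.inr (Or.inl he))
      | Sum.inr A =>
        -- u ∈ A
        have huA : u ∈ A.1 := by
          rcases hxy with ⟨he, -, -⟩ | ⟨he, -, -⟩
          · exact absurd he (by simp [mDAG.canon, delEdge])
          · exact he
        match t, hch, hnd, hlst with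
        | [], _, _, hlst => simp at hlst
        | z :: t', hch, hnd, hlst =>
          have hyz : AdjRel (delEdge G.canon.edge (Set.univ \ {u, v}))
              (Sum.inr A) z := (List.isChain_cons_cons.mp (List.isChain_cons_cons.mp hch).2).1
          match z with
          | Sum.inr B =>
            rcases hyz with ⟨he, -, -⟩ | ⟨he, -, -⟩ <;>
              exact absurd he (by simp [mDAG.canon, delEdge])
          | Sum.inl w =>
            have hwA : w ∈ A.1 := by
              rcases hyz with ⟨he, -, -⟩ | ⟨he, -, -⟩
              · exact he
              · exact absurd he (by simp [mDAG.canon, delEdge])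
            have hwnu : w ≠ u := by
              intro e
              have := (List.nodup_cons.mp hnd).1
              exact this (by simp [e])
            have hw : w = u ∨ w = v := by
              rcases hyz with ⟨-, -, h3⟩ | ⟨-, h2, -⟩
              · have := h3 w rfl; simp [Set.mem_diff] at this; tauto
              · have := h2 w rfl; simp [Set.mem_diff] at this; tauto
            have hwv : w = v := hw.resolve_left hwnu
            subst hwv
            exact h (Or.inr (Or.inr ⟨A.1, A.2.1, huA, hwA⟩))
  · -- e-connection holds in G'
    intro hsep
    apply hsep
    rcases h' with he | he | ⟨A, hA, huA, hvA⟩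
    · refine ⟨[Sum.inl u, Sum.inl v], ?_, ?_,
        ⟨Sum.inl u, ⟨u, rfl, rfl⟩, rfl⟩, ⟨Sum.inl v, ⟨v, rfl, rfl⟩, rfl⟩, trivial⟩
      · refine List.isChain_cons_cons.mpr ⟨Or.inl ⟨he, ?_, ?_⟩, List.isChain_singleton _⟩
        · rintro w ⟨rfl⟩; exact hunotD
        · rintro w ⟨rfl⟩; exact hvnotD
      · simp [huv]
    · refine ⟨[Sum.inl u, Sum.inl v], ?_, ?_,
        ⟨Sum.inl u, ⟨u, rfl, rfl⟩, rfl⟩, ⟨Sum.inl v, ⟨v, rfl, rfl⟩, rfl⟩, trivial⟩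
      · refine List.isChain_cons_cons.mpr ⟨Or.inr ⟨he, ?_, ?_⟩, List.isChain_singleton _⟩
        · rintro w ⟨rfl⟩; exact hvnotD
        · rintro w ⟨rfl⟩; exact hunotD
      · simp [huv]
    · obtain ⟨F, hF, hAF⟩ := G'.exists_facet_superset hA
      refine ⟨[Sum.inl u, Sum.inr ⟨F, hF⟩, Sum.inl v], ?_, ?_,
        ⟨Sum.inl u, ⟨u, rfl, rfl⟩, rfl⟩, ⟨Sum.inl v, ⟨v, rfl, rfl⟩, rfl⟩, ?_⟩
      · refine List.isChain_cons_cons.mpr ⟨Or.inr ⟨hAF huA, ?_, ?_⟩,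
          List.isChain_cons_cons.mpr ⟨Or.inl ⟨hAF hvA, ?_, ?_⟩, List.isChain_singleton _⟩⟩
        · rintro w ⟨⟩
        · rintro w ⟨rfl⟩; exact hunotD
        · rintro w ⟨⟩
        · rintro w ⟨rfl⟩; exact hvnotD
      · simp [huv]
      · refine ⟨Or.inr ⟨?_, by simp⟩, trivial⟩
        rintro ⟨⟨he, -, -⟩ | ⟨he, -, -⟩, -⟩ <;>
          exact absurd he (by simp [mDAG.canon, delEdge])
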